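/- Let Γ be a finite connected graph, possibly with multiple edges and loops, given by a finite vertex set V, a finite set Ē of oriented edges equipped with a fixed-point-free involution ē ↦ ě (orientation reversal), and a source map v₁ : Ē → V (the target of ē being v₂(ē) = v₁(ě)). Let V = V₀ ⊔ V₁ be a partition and let s : Ē → ℤ satisfy s(ě) = −s(ē) for all ē ∈ Ē. Assume s(ē) = 0 whenever both endpoints of ē lie in V₀, and s(ē) > 0 whenever v₁(ē) ∈ V₀ and v₂(ē) ∈ V₁. Then the following are equivalent: (1) there exists a function s : V → ℝ with s_v = 0 for every v ∈ V₀, s_v > 0 for every v ∈ V₁, and such that for every oriented edge ē ∈ Ē there exists λ_ē > 0 with s_{v₂(ē)} − s_{v₁(ē)} = λ_ē · s(ē); (2) the relations 'v ≈ v′ if v and v′ are joined by an edge with label 0' and 'v ≺ v′ if some oriented edge from v to v′ has positive label' are well defined (i.e. for every pair of vertices, all oriented edges from one to the other have labels of the same sign) and generate a partial order on V — formally: Γ contains no closed walk traversing oriented edges ē₁,…,ē_k with s(ēᵢ) ≥ 0 for every i and s(ēᵢ) > 0 for at least one i. -/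

import Mathlib

namespace TropAux

variable {V E : Type*}

/-- `Walk src rev l v w` : the list of oriented edges `l` forms a walk from `v` to `w`. -/
def Walk (src : E → V) (rev : E → E) : List E → V → V → Prop
  | [], v, w => v = w
  | e :: t, v, w => src e = v ∧ Walk src rev t (src (rev e)) w

lemma walk_append (src : E → V) (rev : E → E) :
    ∀ (l : List E) (v w : V), Walk src rev l v w → ∀ e, src e = w →
      Walk src rev (l ++ [e]) v (src (rev e))
  | [], v, w, h, e, he => by
      subst h; exact ⟨he, rfl⟩
  | a :: t, v, w, h, e, he => ⟨h.1, walk_append src rev t _ w h.2 e he⟩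

lemma exists_walk (src : E → V) (rev : E → E) (s : E → ℤ) {v w : V}
    (h : Relation.ReflTransGen (fun a b => ∃ e, src e = a ∧ src (rev e) = b ∧ 0 ≤ s e) v w) :
    ∃ l : List E, Walk src rev l v w ∧ ∀ e ∈ l, 0 ≤ s e := by
  induction h with
  | refl => exact ⟨[], rfl, by simp⟩
  | tail hab hbc ih =>
      obtain ⟨l, hl, hs⟩ := ih
      obtain ⟨e, he1, he2, he3⟩ := hbc
      refine ⟨l ++ [e], ?_, ?_⟩
      · rw [← he2]; exact walk_append src rev l _ _ hl e he1
      · intro x hx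
        rcases List.mem_append.1 hx with h | h
        · exact hs x h
        · simp at h; subst h; exact he3

lemma walk_get_zero (src : E → V) (rev : E → E) :
    ∀ (l : List E) (v w : V), Walk src rev l v w → ∀ h : 0 < l.length,
      src (l.get ⟨0, h⟩) = v
  | a :: t, v, w, hw, _ => hw.1

lemma walk_get_succ (src : E → V) (rev : E → E) :
    ∀ (l : List E) (v w : V) (_ : Walk src rev l v w) (i : ℕ) (h : i + 1 < l.length),
      src (rev (l.get ⟨i, Nat.lt_of_succ_lt h⟩)) = src (l.get ⟨i + 1, h⟩)
  | a :: t, v, w, hw, 0, h =>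
      (walk_get_zero src rev t _ w hw.2 (Nat.lt_of_succ_lt_succ h)).symm
  | a :: t, v, w, hw, i + 1, h =>
      walk_get_succ src rev t _ w hw.2 i (Nat.lt_of_succ_lt_succ h)

lemma walk_get_last (src : E → V) (rev : E → E) :
    ∀ (l : List E) (v w : V) (_ : Walk src rev l v w) (h : 0 < l.length),
      src (rev (l.get ⟨l.length - 1, by omega⟩)) = w
  | [a], v, w, hw, _ => hw.2
  | a :: b :: t, v, w, hw, _ => walk_get_last src rev (b :: t) _ w hw.2 (by simp)

/-- From a positive edge `e₀` and a nonnegative walk from its target back to its source,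
build a closed walk in the `Fin`-indexed format, contradicting `hno`. -/
lemma no_cycle_of (src : E → V) (rev : E → E) (s : E → ℤ)
    (hno : ¬ ∃ (k : ℕ) (e : Fin (k + 1) → E),
      (∀ i : Fin (k + 1), src (rev (e i)) = src (e (i + 1))) ∧
      (∀ i, 0 ≤ s (e i)) ∧ (∃ i, 0 < s (e i)))
    {e₀ : E} (hpos : 0 < s e₀)
    (hreach : Relation.ReflTransGen (fun a b => ∃ e, src e = a ∧ src (rev e) = b ∧ 0 ≤ s e)
      (src (rev e₀)) (src e₀)) : False := by
  obtain ⟨l, hl, hsl⟩ := exists_walk src rev s hreach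
  have hL : Walk src rev (e₀ :: l) (src e₀) (src e₀) := ⟨rfl, hl⟩
  have hlen : (e₀ :: l).length = l.length + 1 := by simp
  refine hno ⟨l.length, fun i => (e₀ :: l).get ⟨i.val, by simpa using i.isLt⟩, ?_, ?_, ?_⟩
  · intro i
    by_cases hi : i = Fin.last l.length
    · subst hi
      have h1 : (Fin.last l.length + 1 : Fin (l.length + 1)) = 0 := by
        simp
      rw [h1]
      have hlast := walk_get_last src rev (e₀ :: l) (src e₀) (src e₀) hL (by simp)
      simp only [List.length_cons, Nat.add_sub_cancel] at hlast
      exact hlast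
    · have hv : i.val + 1 < (e₀ :: l).length := by
        have := Fin.val_lt_last hi
        simpa using this
      have h1 : ((i + 1 : Fin (l.length + 1))).val = i.val + 1 := by
        rw [Fin.val_add_one]
        simp [hi]
      have hsucc := walk_get_succ src rev (e₀ :: l) (src e₀) (src e₀) hL i.val hv
      simp only [h1]
      exact hsucc
  · intro i
    have hmem : (e₀ :: l).get ⟨i.val, by simpa using i.isLt⟩ ∈ e₀ :: l := List.get_mem _ _
    rcases List.mem_cons.1 hmem with h | h
    · simp only [h]; exact hpos.le
    · exact hsl _ h
  · exact ⟨0, hpos⟩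

end TropAux

open TropAux in
/-- Lemma 3.19: for a finite connected graph (with multiple edges and loops allowed) whose
vertices are partitioned into `V₀ = V₁ᶜ` and `V₁`, with an antisymmetric integer label on
oriented edges vanishing on `V₀V₀`-edges and positive on oriented edges from `V₀` to `V₁`,
the existence of a tropical vertex function is equivalent to the absence of a closed walk
all of whose edge labels are nonnegative with at least one positive. -/
theorem tropical_function_iff_partial_order {V E : Type*} [Fintype V] [Fintype E]
    (rev : E → E) (hinv : ∀ e, rev (rev e) = e) (hfpf : ∀ e, rev e ≠ e)
    (src : E → V)
    (hconn : ∀ v w : V, ∃ (k : ℕ) (p : Fin (k + 1) → V) (e : Fin k → E),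
      p 0 = v ∧ p (Fin.last k) = w ∧
      ∀ i : Fin k, src (e i) = p i.castSucc ∧ src (rev (e i)) = p i.succ)
    (V₁ : Set V) (s : E → ℤ)
    (hanti : ∀ e, s (rev e) = -s e)
    (h00 : ∀ e, src e ∉ V₁ → src (rev e) ∉ V₁ → s e = 0)
    (h01 : ∀ e, src e ∉ V₁ → src (rev e) ∈ V₁ → 0 < s e) :
    (∃ f : V → ℝ,
      (∀ v, v ∉ V₁ → f v = 0) ∧ (∀ v ∈ V₁, 0 < f v) ∧
      (∀ e : E, ∃ lam : ℝ, 0 < lam ∧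
        f (src (rev e)) - f (src e) = lam * (s e : ℝ))) ↔
    ¬ ∃ (k : ℕ) (e : Fin (k + 1) → E),
      (∀ i : Fin (k + 1), src (rev (e i)) = src (e (i + 1))) ∧
      (∀ i, 0 ≤ s (e i)) ∧ (∃ i, 0 < s (e i)) := by
  classical
  constructor
  · -- existence of f implies no positive closed walk
    rintro ⟨f, hf0, hf1, hlam⟩ ⟨k, e, hcyc, hnn, i₀, hp⟩
    set g : Fin (k + 1) → ℝ := fun i => f (src (e i)) with hg
    have key : ∀ i, g (i + 1) - g i = f (src (rev (e i))) - f (src (e i)) := by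
      intro i; rw [hg]; simp only []; rw [← hcyc i]
    have hterm : ∀ i, 0 ≤ g (i + 1) - g i := by
      intro i
      rw [key i]
      obtain ⟨lam, hl, heq⟩ := hlam (e i)
      rw [heq]
      exact mul_nonneg hl.le (by exact_mod_cast hnn i)
    have hterm₀ : 0 < g (i₀ + 1) - g i₀ := by
      rw [key i₀]
      obtain ⟨lam, hl, heq⟩ := hlam (e i₀)
      rw [heq]
      exact mul_pos hl (by exact_mod_cast hp)
    have hsum : ∑ i : Fin (k + 1), (g (i + 1) - g i) = 0 := by
      rw [Finset.sum_sub_distrib]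
      have : ∑ i : Fin (k + 1), g (i + 1) = ∑ i : Fin (k + 1), g i :=
        Fintype.sum_equiv (Equiv.addRight 1) _ _ (fun i => rfl)
      rw [this, sub_self]
    have : 0 < ∑ i : Fin (k + 1), (g (i + 1) - g i) :=
      Finset.sum_pos' (fun i _ => hterm i) ⟨i₀, Finset.mem_univ _, hterm₀⟩
    rw [hsum] at this
    exact lt_irrefl 0 this
  · -- no positive closed walk implies existence of f
    intro hno
    set R : V → V → Prop := fun a b => ∃ e, src e = a ∧ src (rev e) = b ∧ 0 ≤ s e with hR
    set reach : V → V → Prop := Relation.ReflTransGen R with hreach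
    -- basic step facts
    have step : ∀ e : E, 0 ≤ s e → reach (src e) (src (rev e)) := by
      intro e he
      exact Relation.ReflTransGen.single ⟨e, rfl, rfl, he⟩
    have step' : ∀ e : E, s e = 0 → reach (src (rev e)) (src e) := by
      intro e he
      have : 0 ≤ s (rev e) := by rw [hanti]; omega
      have h := step (rev e) this
      rwa [hinv] at h
    -- V₀ is downward closed for reach, with zero labels
    have down : ∀ v, v ∉ V₁ → ∀ w, reach w v → w ∉ V₁ ∧ reach v w := by
      intro v hv w h
      induction h using Relation.ReflTransGen.head_induction_on with
      | refl => exact ⟨hv, Relation.ReflTransGen.refl⟩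
      | head hab _ ih =>
          obtain ⟨hb1, hb2⟩ := ih
          obtain ⟨e, he1, he2, he3⟩ := hab
          have hb1' : src (rev e) ∉ V₁ := by rw [he2]; exact hb1
          have hw : src e ∉ V₁ := by
            intro hmem
            have h4 : 0 < s (rev e) := h01 (rev e) hb1' (by rwa [hinv])
            rw [hanti] at h4
            omega
          subst he1
          refine ⟨hw, hb2.trans ?_⟩
          rw [← he2]
          exact step' e (h00 e hw hb1')
    -- zero edges connect same-side vertices
    have side : ∀ e : E, s e = 0 → (src e ∈ V₁ ↔ src (rev e) ∈ V₁) := by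
      intro e he
      constructor
      · intro h1
        by_contra h2
        have : 0 < s (rev e) := h01 (rev e) h2 (by rwa [hinv])
        rw [hanti] at this; omega
      · intro h1
        by_contra h2
        have : 0 < s e := h01 e h2 h1
        omega
    -- positive edges: no reach back
    have noback : ∀ e : E, 0 < s e → ¬ reach (src (rev e)) (src e) := by
      intro e he h
      exact no_cycle_of src rev s hno he h
    -- the potential function
    set S : V → Finset V := fun v => Finset.univ.filter (fun w => reach w v ∧ ¬ reach v w)
      with hS
    set f : V → ℝ := fun v => ((S v).card : ℝ) + (if v ∈ V₁ then 1 else 0) with hf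
    -- card is constant along zero edges
    have Szero : ∀ e : E, s e = 0 → S (src e) = S (src (rev e)) := by
      intro e he
      have h1 : reach (src e) (src (rev e)) := step e he.ge
      have h2 : reach (src (rev e)) (src e) := step' e he
      apply Finset.filter_congr
      intro w _
      constructor
      · rintro ⟨ha, hb⟩
        exact ⟨ha.trans h1, fun hc => hb (h1.trans hc)⟩
      · rintro ⟨ha, hb⟩
        exact ⟨ha.trans h2, fun hc => hb (h2.trans hc)⟩
    -- card strictly increases along positive edges
    have Spos : ∀ e : E, 0 < s e → S (src e) ⊂ S (src (rev e)) := by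
      intro e he
      have h1 : reach (src e) (src (rev e)) := step e he.le
      have h2 : ¬ reach (src (rev e)) (src e) := noback e he
      constructor
      · intro w hw
        simp only [hS, Finset.mem_filter, Finset.mem_univ, true_and] at hw ⊢
        exact ⟨hw.1.trans h1, fun hc => h2 (hc.trans hw.1)⟩
      · intro hsub
        have : src e ∈ S (src (rev e)) := by
          simp only [hS, Finset.mem_filter, Finset.mem_univ, true_and]
          exact ⟨h1, h2⟩
        have := hsub this
        simp only [hS, Finset.mem_filter, Finset.mem_univ, true_and] at this
        exact this.2 Relation.ReflTransGen.refl
    refine ⟨f, ?_, ?_, ?_⟩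
    · -- f vanishes on V₀
      intro v hv
      have hempty : S v = ∅ := by
        apply Finset.eq_empty_iff_forall_notMem.2
        intro w hw
        simp only [hS, Finset.mem_filter, Finset.mem_univ, true_and] at hw
        exact hw.2 (down v hv w hw.1).2
      rw [hf]
      simp [hempty, hv]
    · -- f positive on V₁
      intro v hv
      rw [hf]
      simp only [hv, if_true]
      positivity
    · -- the tropical edge equation
      have posdiff : ∀ e : E, 0 < s e → 0 < f (src (rev e)) - f (src e) := by
        intro e hpos
        have hcard : (S (src e)).card < (S (src (rev e))).card :=
          Finset.card_lt_card (Spos e hpos)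
        have hside : src e ∈ V₁ → src (rev e) ∈ V₁ := by
          intro h
          by_contra h2
          have h3 : 0 < s (rev e) := h01 (rev e) h2 (by rwa [hinv])
          rw [hanti] at h3
          omega
        rw [hf]
        simp only []
        have hind : (if src e ∈ V₁ then (1:ℝ) else 0) ≤ (if src (rev e) ∈ V₁ then 1 else 0) := by
          split_ifs with ha hb
          · exact le_refl _
          · exact absurd (hside ha) hb
          · norm_num
          · exact le_refl _
        have hc : ((S (src e)).card : ℝ) < ((S (src (rev e))).card : ℝ) := by
          exact_mod_cast hcard
        linarith
      intro e
      rcases lt_trichotomy (s e) 0 with hneg | hzero | hpos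
      · -- negative edge: use rev e
        have hp : 0 < s (rev e) := by rw [hanti]; omega
        have h := posdiff (rev e) hp
        rw [hinv] at h
        have hdiff : f (src (rev e)) - f (src e) < 0 := by linarith
        refine ⟨(f (src (rev e)) - f (src e)) / (s e : ℝ), ?_, ?_⟩
        · apply div_pos_of_neg_of_neg hdiff
          exact_mod_cast hneg
        · have hs0 : (s e : ℝ) ≠ 0 := by exact_mod_cast hneg.ne
          field_simp
      · -- zero edge
        refine ⟨1, one_pos, ?_⟩
        rw [hzero]
        have h1 : S (src e) = S (src (rev e)) := Szero e hzero
        have h2 : (src e ∈ V₁) = (src (rev e) ∈ V₁) := propext (side e hzero)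
        rw [hf]
        simp [h1, h2]
      · -- positive edge
        have hdiff := posdiff e hpos
        refine ⟨(f (src (rev e)) - f (src e)) / (s e : ℝ), ?_, ?_⟩
        · apply div_pos hdiff
          exact_mod_cast hpos
        · have hs0 : (s e : ℝ) ≠ 0 := by exact_mod_cast hpos.ne'
          field_simp
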